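/- Let X_i, i ≥ 1, be from the Zipf–Poisson ensemble with parameters α > 1 and N > 0, and write λ_n = N n^{−α}. If τ is a real number with τ ≥ λ_n and τ > 1/α, then Pr(sup_{i > n} X_i > τ) ≤ (N^{1/α} / α) · ((τ+1) / (τ+1−λ_n)) · (τ^{−1/α} / (τ − 1/α)). -/

import Mathlib

open MeasureTheory ProbabilityTheory
open Real Set


/-- `e^{-u} u^k` is monotone in `u` for `u ≤ k`. -/
lemma exp_neg_mul_pow_mono {a b : ℝ} {k : ℕ} (ha : 0 < a) (hab : a ≤ b)
    (hbk : b ≤ k) : Real.exp (-a) * a ^ k ≤ Real.exp (-b) * b ^ k := by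
  have hb : 0 < b := lt_of_lt_of_le ha hab
  have hk : 0 < (k : ℝ) := lt_of_lt_of_le hb hbk
  have hlog : Real.log a - Real.log b ≤ a / b - 1 := by
    have := Real.log_le_sub_one_of_pos (div_pos ha hb)
    rwa [Real.log_div ha.ne' hb.ne'] at this
  have key : b - a ≤ (k : ℝ) * (Real.log b - Real.log a) := by
    have h1 : (b - a) / b ≤ Real.log b - Real.log a := by
      have h1' : 1 - a / b ≤ Real.log b - Real.log a := by linarith
      have : (b - a) / b = 1 - a / b := by field_simp
      linarith [this ▸ h1']
    have h2 : b - a ≤ (k : ℝ) * ((b - a) / b) := by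
      have hba : 0 ≤ (b - a) / b := div_nonneg (by linarith) hb.le
      have : b * ((b - a) / b) = b - a := by field_simp
      nlinarith [mul_le_mul_of_nonneg_right hbk hba]
    nlinarith [mul_le_mul_of_nonneg_left h1 hk.le]
  have ea : Real.exp (-a) * a ^ k = Real.exp (-a + k * Real.log a) := by
    rw [Real.exp_add, Real.exp_nat_mul, Real.exp_log ha]
  have eb : Real.exp (-b) * b ^ k = Real.exp (-b + k * Real.log b) := by
    rw [Real.exp_add, Real.exp_nat_mul, Real.exp_log hb]
  rw [ea, eb]
  apply Real.exp_le_exp.2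
  linarith

/-- Gamma ratio bound via log-convexity (Gautschi-type). -/
lemma gamma_ratio_bound {s τ : ℝ} (k : ℕ) (hs0 : 0 < s) (hs1 : s < 1)
    (hsτ : s < τ) (hτk : τ ≤ k) :
    Real.Gamma ((k : ℝ) - s) / (Nat.factorial k) ≤ τ ^ (-s) / (τ - s) := by
  have hτ0 : 0 < τ := hs0.trans hsτ
  have hk0 : 0 < (k : ℝ) := hτ0.trans_le hτk
  have hk1 : 1 ≤ k := by
    by_contra h
    push_neg at h
    interval_cases k
    · simp at hk0
  have hks : 0 < (k : ℝ) - s := by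
    have : s < (k : ℝ) := hsτ.trans_le hτk
    linarith
  -- log-convexity: Γ(k+1-s) ≤ Γ(k)^s * Γ(k+1)^(1-s)
  have hconv := Real.convexOn_log_Gamma.2 (x := (k : ℝ)) (y := (k : ℝ) + 1)
    (Set.mem_Ioi.mpr hk0) (Set.mem_Ioi.mpr (by linarith)) hs0.le (by linarith : (0:ℝ) ≤ 1 - s)
    (by ring)
  have hcomb : s • (k : ℝ) + (1 - s) • ((k : ℝ) + 1) = (k : ℝ) + 1 - s := by
    simp [smul_eq_mul]; ring
  rw [hcomb] at hconv
  have hΓk : 0 < Real.Gamma (k : ℝ) := Real.Gamma_pos_of_pos hk0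
  have hΓk1 : 0 < Real.Gamma ((k : ℝ) + 1) := Real.Gamma_pos_of_pos (by linarith)
  have hΓks : 0 < Real.Gamma ((k : ℝ) + 1 - s) := Real.Gamma_pos_of_pos (by linarith)
  have hineq : Real.Gamma ((k : ℝ) + 1 - s) ≤
      Real.Gamma (k : ℝ) ^ s * Real.Gamma ((k : ℝ) + 1) ^ (1 - s) := by
    have : Real.log (Real.Gamma ((k:ℝ) + 1 - s)) ≤
        s * Real.log (Real.Gamma (k:ℝ)) + (1 - s) * Real.log (Real.Gamma ((k:ℝ)+1)) := by
      simpa [Function.comp, smul_eq_mul] using hconv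
    calc Real.Gamma ((k : ℝ) + 1 - s) = Real.exp (Real.log (Real.Gamma ((k:ℝ)+1-s))) :=
          (Real.exp_log hΓks).symm
      _ ≤ Real.exp (s * Real.log (Real.Gamma (k:ℝ)) + (1-s) * Real.log (Real.Gamma ((k:ℝ)+1))) :=
          Real.exp_le_exp.2 this
      _ = Real.Gamma (k:ℝ) ^ s * Real.Gamma ((k:ℝ)+1) ^ (1-s) := by
          rw [Real.exp_add, Real.rpow_def_of_pos hΓk, Real.rpow_def_of_pos hΓk1,
            mul_comm s, mul_comm (1-s)]
  -- Γ(k)^s * Γ(k+1)^(1-s) = k! * k^(-s)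
  have hΓkval : Real.Gamma ((k:ℝ) + 1) = (Nat.factorial k : ℝ) := by
    exact_mod_cast Real.Gamma_nat_eq_factorial k
  have hΓkval' : Real.Gamma (k:ℝ) = (Nat.factorial k : ℝ) / k := by
    have h := Real.Gamma_add_one (s := (k:ℝ)) hk0.ne'
    rw [hΓkval] at h
    field_simp at h ⊢
    linarith
  have hfac0 : 0 < (Nat.factorial k : ℝ) := by exact_mod_cast Nat.factorial_pos k
  have hprod : Real.Gamma (k:ℝ) ^ s * Real.Gamma ((k:ℝ)+1) ^ (1-s)
      = (Nat.factorial k : ℝ) * (k : ℝ) ^ (-s) := by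
    rw [hΓkval, hΓkval', Real.div_rpow hfac0.le hk0.le, div_mul_eq_mul_div,
      ← Real.rpow_add hfac0]
    have h1 : s + (1 - s) = 1 := by ring
    rw [h1, Real.rpow_one, Real.rpow_neg hk0.le, div_eq_mul_inv]
  -- Γ(k+1-s) = (k-s) Γ(k-s)
  have hrec : Real.Gamma ((k:ℝ) + 1 - s) = ((k:ℝ) - s) * Real.Gamma ((k:ℝ) - s) := by
    have := Real.Gamma_add_one (s := (k:ℝ) - s) hks.ne'
    rw [show (k:ℝ) - s + 1 = (k:ℝ) + 1 - s by ring] at this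
    exact this
  have hmain : Real.Gamma ((k:ℝ) - s) ≤ (Nat.factorial k : ℝ) * (k:ℝ) ^ (-s) / ((k:ℝ) - s) := by
    rw [le_div_iff₀ hks]
    calc Real.Gamma ((k:ℝ) - s) * ((k:ℝ) - s) = Real.Gamma ((k:ℝ)+1-s) := by
          rw [hrec]; ring
      _ ≤ _ := hineq.trans_eq hprod
  have hks' : τ - s ≤ (k:ℝ) - s := by linarith
  have hτs : 0 < τ - s := by linarith
  have hrpow : (k:ℝ) ^ (-s) ≤ τ ^ (-s) :=
    Real.rpow_le_rpow_of_nonpos hτ0 hτk (by linarith)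
  calc Real.Gamma ((k:ℝ) - s) / (Nat.factorial k)
      ≤ ((Nat.factorial k : ℝ) * (k:ℝ) ^ (-s) / ((k:ℝ) - s)) / (Nat.factorial k : ℝ) := by
        gcongr
    _ = (k:ℝ) ^ (-s) / ((k:ℝ) - s) := by field_simp
    _ ≤ τ ^ (-s) / (τ - s) := by
        apply div_le_div₀ (by positivity) hrpow hτs hks'


lemma zipf_lintegral {α N : ℝ} (hα : 1 < α) (hN : 0 < N) (k : ℕ) (hk : 1 ≤ k) :
    ∫⁻ x in Set.Ioi (0:ℝ), ENNReal.ofReal (Real.exp (-(N * x ^ (-α))) * (N * x ^ (-α)) ^ k)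
      = ENNReal.ofReal (N ^ (1/α) / α * Real.Gamma ((k:ℝ) - 1/α)) := by
  have hα0 : (0:ℝ) < α := by linarith
  set s : ℝ := 1/α with hs_def
  have hs0 : 0 < s := by positivity
  have hs1 : s < 1 := by rw [hs_def]; rw [div_lt_one hα0]; linarith
  have hk1 : (1:ℝ) ≤ (k:ℝ) := by exact_mod_cast hk
  have ha0 : 0 < (k:ℝ) - s := by linarith
  set a : ℝ := (k:ℝ) - s with ha_def
  set g : ℝ → ℝ := fun u => u ^ (a - 1) * Real.exp (-(N * u)) with hg_def
  set f : ℝ → ℝ := fun u => (N ^ k / α) * g u with hf_def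
  set h : ℝ → ℝ := fun x => Real.exp (-(N * x ^ (-α))) * (N * x ^ (-α)) ^ k with hh_def
  have hαne : (-α) ≠ 0 := by intro hc; rw [neg_eq_zero] at hc; linarith
  -- pointwise identity on Ioi 0
  have hEq : ∀ x ∈ Set.Ioi (0:ℝ), (|(-α)| * x ^ ((-α) - 1)) • f (x ^ (-α)) = h x := by
    intro x hx
    have hx0 : (0:ℝ) < x := hx
    have hxa : (0:ℝ) < x ^ (-α) := Real.rpow_pos_of_pos hx0 _
    have habs : |(-α)| = α := by rw [abs_neg, abs_of_pos hα0]
    have h1 : (x ^ (-α)) ^ (a - 1) = x ^ ((-α) * (a - 1)) := by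
      rw [← Real.rpow_mul hx0.le]
    have h2 : ((x : ℝ) ^ (-α)) ^ k = x ^ ((-α) * k) := by
      rw [← Real.rpow_natCast (x ^ (-α)) k, ← Real.rpow_mul hx0.le]
    have h3 : (N * x ^ (-α)) ^ k = N ^ k * x ^ ((-α) * k) := by
      rw [mul_pow, h2]
    have hαs : α * s = 1 := by
      rw [hs_def]; field_simp
    simp only [smul_eq_mul, hf_def, hg_def, hh_def, habs, h1, h3]
    have hexp : α * x ^ (-α - 1) * (N ^ k / α * (x ^ ((-α) * (a-1)) * Real.exp (-(N * x ^ (-α)))))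
        = N ^ k * (x ^ (-α - 1) * x ^ ((-α) * (a - 1))) * Real.exp (-(N * x ^ (-α))) := by
      field_simp
    rw [hexp, ← Real.rpow_add hx0]
    have : (-α - 1) + (-α) * (a - 1) = (-α) * (k:ℝ) := by
      have : α * s = 1 := hαs
      rw [ha_def]
      nlinarith [this]
    rw [this]
    ring
  -- integrability of g on Ioi 0
  have hgInt : IntegrableOn g (Set.Ioi (0:ℝ)) := by
    have hbase := Real.GammaIntegral_convergent ha0
    have hcomp : IntegrableOn (fun x => Real.exp (-(N*x)) * (N*x) ^ (a-1)) (Set.Ioi (0:ℝ)) := by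
      have := (integrableOn_Ioi_comp_mul_left_iff
        (fun x => Real.exp (-x) * x ^ (a-1)) 0 hN).mpr (by simpa using hbase)
      simpa using this
    have : IntegrableOn (fun x => (N ^ (a-1))⁻¹ * (Real.exp (-(N*x)) * (N*x) ^ (a-1)))
        (Set.Ioi (0:ℝ)) := hcomp.const_mul _
    apply this.congr_fun ?_ measurableSet_Ioi
    intro x hx
    have hx0 : (0:ℝ) < x := hx
    have hNa : (0:ℝ) < N ^ (a-1) := Real.rpow_pos_of_pos hN _
    simp only [hg_def, Real.mul_rpow hN.le hx0.le]
    field_simp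
  have hfInt : IntegrableOn f (Set.Ioi (0:ℝ)) := hgInt.const_mul _
  -- integrability of h
  have hhInt : IntegrableOn h (Set.Ioi (0:ℝ)) := by
    have := (integrableOn_Ioi_comp_rpow_iff f hαne).mpr hfInt
    exact this.congr_fun hEq measurableSet_Ioi
  -- value of ∫ g
  have hgval : ∫ u in Set.Ioi (0:ℝ), g u = (1/N) ^ a * Real.Gamma a :=
    Real.integral_rpow_mul_exp_neg_mul_Ioi ha0 hN
  -- value of ∫ h
  have hhval : ∫ x in Set.Ioi (0:ℝ), h x = N ^ (1/α) / α * Real.Gamma a := by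
    have h1 : ∫ x in Set.Ioi (0:ℝ), h x
        = ∫ x in Set.Ioi (0:ℝ), (|(-α)| * x ^ ((-α) - 1)) • f (x ^ (-α)) :=
      (setIntegral_congr_fun measurableSet_Ioi hEq).symm
    rw [h1, integral_comp_rpow_Ioi f hαne]
    have h2 : ∫ u in Set.Ioi (0:ℝ), f u = (N ^ k / α) * ∫ u in Set.Ioi (0:ℝ), g u :=
      integral_const_mul _ _
    rw [h2, hgval]
    have h3 : (N:ℝ) ^ k * (1/N) ^ a = N ^ s := by
      rw [one_div, ← Real.rpow_natCast N k, Real.inv_rpow hN.le, ← Real.rpow_neg hN.le,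
        ← Real.rpow_add hN]
      congr 1
      rw [ha_def]; ring
    calc N ^ k / α * ((1/N) ^ a * Real.Gamma a)
        = (N ^ k * (1/N) ^ a) * Real.Gamma a / α := by ring
      _ = N ^ s / α * Real.Gamma a := by rw [h3]; ring
      _ = N ^ (1/α) / α * Real.Gamma a := by rw [hs_def]
  -- nonnegativity a.e.
  have hae : 0 ≤ᶠ[ae (volume.restrict (Set.Ioi (0:ℝ)))] h := by
    filter_upwards [ae_restrict_mem measurableSet_Ioi] with x hx
    have hx0 : (0:ℝ) < x := hx
    have : 0 ≤ N * x ^ (-α) := mul_nonneg hN.le (Real.rpow_nonneg hx0.le _)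
    positivity
  rw [← MeasureTheory.ofReal_integral_eq_lintegral_ofReal hhInt hae, hhval]


lemma poisson_tail {Ω : Type*} [MeasurableSpace Ω] (P : Measure Ω) (Y : Ω → ℕ)
    (lam : ℝ) (hlam : 0 < lam) (k : ℕ) (hlamk : lam < (k:ℝ) + 1)
    (hY : ∀ m : ℕ, P {ω | Y ω = m}
      = ENNReal.ofReal (Real.exp (-lam) * lam ^ m / m.factorial)) :
    P {ω | k ≤ Y ω} ≤ ENNReal.ofReal
      (Real.exp (-lam) * lam ^ k / k.factorial * (((k:ℝ)+1) / ((k:ℝ)+1-lam))) := by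
  set c : ℝ := Real.exp (-lam) * lam ^ k / k.factorial with hc_def
  set r : ℝ := lam / ((k:ℝ)+1) with hr_def
  have hk1 : (0:ℝ) < (k:ℝ) + 1 := by positivity
  have hr0 : 0 ≤ r := by positivity
  have hr1 : r < 1 := by rw [hr_def, div_lt_one hk1]; linarith
  have hc0 : 0 ≤ c := by positivity
  have hsub : {ω | k ≤ Y ω} ⊆ ⋃ j : ℕ, {ω | Y ω = k + j} := by
    intro ω hω
    exact Set.mem_iUnion.mpr ⟨Y ω - k, by simp [Nat.add_sub_cancel' hω]⟩
  have hterm : ∀ j : ℕ, P {ω | Y ω = k + j} ≤ ENNReal.ofReal (c * r ^ j) := by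
    intro j
    rw [hY (k + j)]
    apply ENNReal.ofReal_le_ofReal
    have hfac : (k.factorial : ℝ) * ((k:ℝ)+1) ^ j ≤ ((k+j).factorial : ℝ) := by
      exact_mod_cast Nat.factorial_mul_pow_le_factorial (m := k) (n := j)
    have hfacpos : (0:ℝ) < (k.factorial : ℝ) * ((k:ℝ)+1) ^ j := by positivity
    have h1 : lam ^ (k+j) / ((k+j).factorial : ℝ)
        ≤ lam ^ (k+j) / ((k.factorial : ℝ) * ((k:ℝ)+1) ^ j) := by
      apply div_le_div_of_nonneg_left (by positivity) hfacpos hfac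
    have h2 : lam ^ (k+j) / ((k.factorial : ℝ) * ((k:ℝ)+1) ^ j)
        = lam ^ k / k.factorial * r ^ j := by
      rw [pow_add, hr_def, div_pow, div_mul_div_comm]
    calc Real.exp (-lam) * lam ^ (k+j) / ((k+j).factorial : ℝ)
        = Real.exp (-lam) * (lam ^ (k+j) / ((k+j).factorial : ℝ)) := by ring
      _ ≤ Real.exp (-lam) * (lam ^ k / k.factorial * r ^ j) := by
          apply mul_le_mul_of_nonneg_left (h1.trans_eq h2) (Real.exp_pos _).le
      _ = c * r ^ j := by rw [hc_def]; ring
  have hsum : Summable (fun j : ℕ => c * r ^ j) :=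
    (summable_geometric_of_lt_one hr0 hr1).mul_left c
  calc P {ω | k ≤ Y ω} ≤ P (⋃ j : ℕ, {ω | Y ω = k + j}) := measure_mono hsub
    _ ≤ ∑' j : ℕ, P {ω | Y ω = k + j} := measure_iUnion_le _
    _ ≤ ∑' j : ℕ, ENNReal.ofReal (c * r ^ j) := ENNReal.tsum_le_tsum hterm
    _ = ENNReal.ofReal (∑' j : ℕ, c * r ^ j) :=
        (ENNReal.ofReal_tsum_of_nonneg (fun j => by positivity) hsum).symm
    _ = ENNReal.ofReal (c * (1 - r)⁻¹) := by rw [tsum_mul_left, tsum_geometric_of_lt_one hr0 hr1]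
    _ = ENNReal.ofReal (c * (((k:ℝ)+1) / ((k:ℝ)+1-lam))) := by
        congr 1
        have h3 : 1 - r = ((k:ℝ)+1-lam) / ((k:ℝ)+1) := by
          rw [hr_def]; field_simp
        rw [h3, inv_div]

/-- The Zipf–Poisson ensemble with parameters `α > 1`, `N > 0`: the random variables
`X i`, for integers `i ≥ 1`, are independent and `X i ~ Poisson(N * i^(-α))`. -/
def IsZipfPoisson {Ω : Type*} [MeasurableSpace Ω] (P : Measure Ω)
    (X : ℕ → Ω → ℕ) (α N : ℝ) : Prop :=
  iIndepFun (fun i : {i : ℕ // 1 ≤ i} => X i) P ∧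
  ∀ i : ℕ, 1 ≤ i → ∀ k : ℕ,
    P {ω | X i ω = k} =
      ENNReal.ofReal (Real.exp (-(N * (i : ℝ) ^ (-α))) * (N * (i : ℝ) ^ (-α)) ^ k /
        (Nat.factorial k))

theorem zipf_poisson_tail_jump_bound
    {Ω : Type*} [MeasurableSpace Ω] (P : Measure Ω) [IsProbabilityMeasure P]
    (X : ℕ → Ω → ℕ) (α N : ℝ) (hα : 1 < α) (hN : 0 < N)
    (hzp : IsZipfPoisson P X α N)
    (n : ℕ) (hn : 1 ≤ n) (τ : ℝ)
    (hτ : N * (n : ℝ) ^ (-α) ≤ τ) (hτα : 1 / α < τ) :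
    P {ω | ∃ i : ℕ, n < i ∧ τ < (X i ω : ℝ)} ≤
      ENNReal.ofReal
        (N ^ (1 / α) / α * ((τ + 1) / (τ + 1 - N * (n : ℝ) ^ (-α))) *
          (τ ^ (-1 / α) / (τ - 1 / α))) := by
  have hα0 : (0:ℝ) < α := by linarith
  have hs0 : (0:ℝ) < 1/α := by positivity
  have hs1 : 1/α < 1 := by rw [div_lt_one hα0]; exact hα
  have hτ0 : (0:ℝ) < τ := hs0.trans hτα
  set k : ℕ := Nat.floor τ + 1 with hk_def
  have hk1 : 1 ≤ k := Nat.le_add_left 1 _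
  have hτk : τ < (k:ℝ) := by
    have := Nat.lt_floor_add_one τ
    push_cast [hk_def]
    exact_mod_cast this
  -- lambda notation
  set lam : ℕ → ℝ := fun i => N * (i : ℝ) ^ (-α) with hlam_def
  have hn0 : (0:ℝ) < (n:ℝ) := by exact_mod_cast hn
  have hlam_pos : ∀ i : ℕ, 1 ≤ i → 0 < lam i := fun i hi => by
    have : (0:ℝ) < (i:ℝ) := by exact_mod_cast hi
    exact mul_pos hN (Real.rpow_pos_of_pos this _)
  have hlam_le : ∀ i : ℕ, n ≤ i → lam i ≤ lam n := fun i hi => by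
    have h1 : (n:ℝ) ≤ (i:ℝ) := by exact_mod_cast hi
    exact mul_le_mul_of_nonneg_left
      (Real.rpow_le_rpow_of_nonpos hn0 h1 (by linarith)) hN.le
  have hlamn_pos : 0 < lam n := hlam_pos n hn
  have hlamnτ : lam n ≤ τ := hτ
  set A : ℝ := (τ + 1) / (τ + 1 - lam n) with hA_def
  have hden : (0:ℝ) < τ + 1 - lam n := by linarith
  have hA0 : 0 ≤ A := by positivity
  -- the continuous majorant
  set G : ℝ → ENNReal := fun x =>
    ENNReal.ofReal (Real.exp (-(N * x ^ (-α))) * (N * x ^ (-α)) ^ k) with hG_def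
  have hGmeas : Measurable G := by
    apply Measurable.ennreal_ofReal
    fun_prop
  -- step 1: union bound decomposition
  have hsub : {ω | ∃ i : ℕ, n < i ∧ τ < (X i ω : ℝ)}
      ⊆ ⋃ j : ℕ, {ω | τ < (X (n + 1 + j) ω : ℝ)} := by
    rintro ω ⟨i, hi, hτi⟩
    refine Set.mem_iUnion.mpr ⟨i - (n+1), ?_⟩
    have : n + 1 + (i - (n+1)) = i := by omega
    rw [this]
    exact hτi
  -- per-index bound
  have hstep : ∀ j : ℕ, P {ω | τ < (X (n + 1 + j) ω : ℝ)}
      ≤ ENNReal.ofReal (A / (Nat.factorial k)) *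
        ∫⁻ x in Set.Ioc ((n:ℝ)+j) ((n:ℝ)+j+1), G x := by
    intro j
    set i : ℕ := n + 1 + j with hi_def
    have hi1 : 1 ≤ i := by omega
    have hni : n ≤ i := by omega
    have hicast : (i:ℝ) = (n:ℝ) + j + 1 := by push_cast [hi_def]; ring
    have hlami_pos : 0 < lam i := hlam_pos i hi1
    have hlami_le : lam i ≤ lam n := hlam_le i hni
    have hlamiτ : lam i ≤ τ := hlami_le.trans hlamnτ
    have hset : {ω | τ < (X i ω : ℝ)} = {ω | k ≤ X i ω} := by
      ext ω
      simp only [Set.mem_setOf_eq]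
      rw [← Nat.floor_lt hτ0.le, hk_def]
      omega
    have htail := poisson_tail P (X i) (lam i) hlami_pos k
      (by linarith : lam i < (k:ℝ) + 1)
      (fun m => by simpa [hlam_def] using hzp.2 i hi1 m)
    -- real inequality: tail bound ≤ (A/k!) * (exp(-(lam i)) * lam i ^ k)
    have hratio : ((k:ℝ)+1) / ((k:ℝ)+1-lam i) ≤ A := by
      have hd1 : (0:ℝ) < (k:ℝ)+1-lam i := by linarith
      have hd2 : (0:ℝ) < τ+1-lam i := by linarith
      have hr1 : ((k:ℝ)+1) / ((k:ℝ)+1-lam i) ≤ (τ+1) / (τ+1-lam i) := by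
        rw [div_le_div_iff₀ hd1 hd2]
        nlinarith [hlami_pos.le, hτk.le]
      have hr2 : (τ+1) / (τ+1-lam i) ≤ A := by
        rw [hA_def]
        exact div_le_div_of_nonneg_left (by linarith) hden (by linarith)
      exact hr1.trans hr2
    have hreal : Real.exp (-(lam i)) * lam i ^ k / (Nat.factorial k) *
        (((k:ℝ)+1) / ((k:ℝ)+1-lam i))
        ≤ A / (Nat.factorial k) * (Real.exp (-(lam i)) * lam i ^ k) := by
      have hnn : 0 ≤ Real.exp (-(lam i)) * lam i ^ k / (Nat.factorial k) := by positivity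
      calc Real.exp (-(lam i)) * lam i ^ k / (Nat.factorial k) *
            (((k:ℝ)+1) / ((k:ℝ)+1-lam i))
          ≤ Real.exp (-(lam i)) * lam i ^ k / (Nat.factorial k) * A :=
            mul_le_mul_of_nonneg_left hratio hnn
        _ = A / (Nat.factorial k) * (Real.exp (-(lam i)) * lam i ^ k) := by ring
    -- lintegral lower bound for the single term
    have hlint : ENNReal.ofReal (Real.exp (-(lam i)) * lam i ^ k)
        ≤ ∫⁻ x in Set.Ioc ((n:ℝ)+j) ((n:ℝ)+j+1), G x := by
      have hvol : volume (Set.Ioc ((n:ℝ)+j) ((n:ℝ)+j+1)) = 1 := by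
        rw [Real.volume_Ioc]
        norm_num
      have hconst : ENNReal.ofReal (Real.exp (-(lam i)) * lam i ^ k)
          = ∫⁻ _ in Set.Ioc ((n:ℝ)+j) ((n:ℝ)+j+1),
              ENNReal.ofReal (Real.exp (-(lam i)) * lam i ^ k) := by
        rw [setLIntegral_const, hvol, mul_one]
      rw [hconst]
      apply setLIntegral_mono hGmeas
      intro x hx
      apply ENNReal.ofReal_le_ofReal
      have hx1 : (n:ℝ) + j < x := hx.1
      have hx2 : x ≤ (n:ℝ) + j + 1 := hx.2
      have hx0 : (0:ℝ) < x := by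
        have : (0:ℝ) ≤ (n:ℝ) + j := by positivity
        linarith
    -- a = lam i ≤ b = N x^(-α) ≤ k
      have hab : lam i ≤ N * x ^ (-α) := by
        rw [hlam_def]
        have : (x:ℝ) ^ (-α) ≥ (i:ℝ) ^ (-α) := by
          apply Real.rpow_le_rpow_of_nonpos hx0 (by rw [hicast]; exact hx2) (by linarith)
        exact mul_le_mul_of_nonneg_left this hN.le
      have hbk : N * x ^ (-α) ≤ (k:ℝ) := by
        have hnx : (n:ℝ) ≤ x := by
          have : (0:ℝ) ≤ (j:ℝ) := by positivity
          linarith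
        have h1 : x ^ (-α) ≤ (n:ℝ) ^ (-α) :=
          Real.rpow_le_rpow_of_nonpos hn0 hnx (by linarith)
        have h2 : N * x ^ (-α) ≤ lam n := mul_le_mul_of_nonneg_left h1 hN.le
        linarith
      exact exp_neg_mul_pow_mono hlami_pos hab hbk
    calc P {ω | τ < (X i ω : ℝ)} = P {ω | k ≤ X i ω} := by rw [hset]
      _ ≤ ENNReal.ofReal (Real.exp (-(lam i)) * lam i ^ k / (Nat.factorial k) *
            (((k:ℝ)+1) / ((k:ℝ)+1-lam i))) := htail
      _ ≤ ENNReal.ofReal (A / (Nat.factorial k) * (Real.exp (-(lam i)) * lam i ^ k)) :=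
          ENNReal.ofReal_le_ofReal hreal
      _ = ENNReal.ofReal (A / (Nat.factorial k)) *
            ENNReal.ofReal (Real.exp (-(lam i)) * lam i ^ k) :=
          ENNReal.ofReal_mul (by positivity)
      _ ≤ ENNReal.ofReal (A / (Nat.factorial k)) *
            ∫⁻ x in Set.Ioc ((n:ℝ)+j) ((n:ℝ)+j+1), G x :=
          mul_le_mul_right hlint _
  -- union of intervals
  have hUnion : (⋃ j : ℕ, Set.Ioc ((n:ℝ)+j) ((n:ℝ)+j+1)) = Set.Ioi (n:ℝ) := by
    ext x
    simp only [Set.mem_iUnion, Set.mem_Ioc, Set.mem_Ioi]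
    constructor
    · rintro ⟨j, h1, _⟩
      have : (0:ℝ) ≤ (j:ℝ) := by positivity
      linarith
    · intro hx
      have hxn : 0 < x - (n:ℝ) := by linarith
      set m : ℕ := Nat.ceil (x - (n:ℝ)) with hm_def
      have hm1 : 1 ≤ m := Nat.one_le_ceil_iff.mpr hxn
      refine ⟨m - 1, ?_, ?_⟩
      · have hcast : ((m - 1 : ℕ) : ℝ) = (m:ℝ) - 1 := by
          push_cast [Nat.cast_sub hm1]
          ring
        rw [hcast]
        have := Nat.ceil_lt_add_one hxn.le
        rw [← hm_def] at this
        linarith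
      · have hcast : ((m - 1 : ℕ) : ℝ) = (m:ℝ) - 1 := by
          push_cast [Nat.cast_sub hm1]
          ring
        rw [hcast]
        have := Nat.le_ceil (x - (n:ℝ))
        rw [← hm_def] at this
        linarith
  have hdisj : Pairwise (Function.onFun Disjoint
      (fun j : ℕ => Set.Ioc ((n:ℝ)+j) ((n:ℝ)+j+1))) := by
    intro a b hab
    rw [Function.onFun, Set.Ioc_disjoint_Ioc]
    rcases Ne.lt_or_gt hab with h | h
    · have : (a:ℝ) + 1 ≤ (b:ℝ) := by exact_mod_cast h
      exact (min_le_left _ _).trans ((by linarith : (n:ℝ)+a+1 ≤ (n:ℝ)+b).trans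
        (le_max_right _ _))
    · have : (b:ℝ) + 1 ≤ (a:ℝ) := by exact_mod_cast h
      exact (min_le_right _ _).trans ((by linarith : (n:ℝ)+b+1 ≤ (n:ℝ)+a).trans
        (le_max_left _ _))
  have hlint_union : ∑' j : ℕ, ∫⁻ x in Set.Ioc ((n:ℝ)+j) ((n:ℝ)+j+1), G x
      = ∫⁻ x in Set.Ioi (n:ℝ), G x := by
    rw [← hUnion, lintegral_iUnion (fun j => measurableSet_Ioc) hdisj]
  -- final gamma bound
  have hgamma : A / (Nat.factorial k) * (N ^ (1/α) / α * Real.Gamma ((k:ℝ) - 1/α))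
      ≤ N ^ (1 / α) / α * A * (τ ^ (-1 / α) / (τ - 1 / α)) := by
    have hg := gamma_ratio_bound k hs0 hs1 hτα hτk.le
    have hfac : (0:ℝ) < (Nat.factorial k : ℝ) := by exact_mod_cast Nat.factorial_pos k
    have hmul : (0:ℝ) ≤ N ^ (1/α) / α * A := by positivity
    have hneg : (-1)/α = -(1/α) := by ring
    calc A / (Nat.factorial k) * (N ^ (1/α) / α * Real.Gamma ((k:ℝ) - 1/α))
        = (N ^ (1/α) / α * A) * (Real.Gamma ((k:ℝ) - 1/α) / (Nat.factorial k)) := by ring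
      _ ≤ (N ^ (1/α) / α * A) * (τ ^ (-(1/α)) / (τ - 1/α)) :=
          mul_le_mul_of_nonneg_left hg hmul
      _ = N ^ (1 / α) / α * A * (τ ^ (-1 / α) / (τ - 1 / α)) := by rw [hneg]
  -- assemble
  calc P {ω | ∃ i : ℕ, n < i ∧ τ < (X i ω : ℝ)}
      ≤ P (⋃ j : ℕ, {ω | τ < (X (n + 1 + j) ω : ℝ)}) := measure_mono hsub
    _ ≤ ∑' j : ℕ, P {ω | τ < (X (n + 1 + j) ω : ℝ)} := measure_iUnion_le _
    _ ≤ ∑' j : ℕ, (ENNReal.ofReal (A / (Nat.factorial k)) *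
          ∫⁻ x in Set.Ioc ((n:ℝ)+j) ((n:ℝ)+j+1), G x) := ENNReal.tsum_le_tsum hstep
    _ = ENNReal.ofReal (A / (Nat.factorial k)) *
          ∑' j : ℕ, ∫⁻ x in Set.Ioc ((n:ℝ)+j) ((n:ℝ)+j+1), G x := ENNReal.tsum_mul_left
    _ = ENNReal.ofReal (A / (Nat.factorial k)) * ∫⁻ x in Set.Ioi (n:ℝ), G x := by
          rw [hlint_union]
    _ ≤ ENNReal.ofReal (A / (Nat.factorial k)) * ∫⁻ x in Set.Ioi (0:ℝ), G x :=
          mul_le_mul_right (lintegral_mono_set (Set.Ioi_subset_Ioi hn0.le)) _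
    _ = ENNReal.ofReal (A / (Nat.factorial k)) *
          ENNReal.ofReal (N ^ (1/α) / α * Real.Gamma ((k:ℝ) - 1/α)) := by
          rw [hG_def, zipf_lintegral hα hN k hk1]
    _ = ENNReal.ofReal (A / (Nat.factorial k) * (N ^ (1/α) / α * Real.Gamma ((k:ℝ) - 1/α))) :=
          (ENNReal.ofReal_mul (by positivity)).symm
    _ ≤ ENNReal.ofReal (N ^ (1 / α) / α * ((τ + 1) / (τ + 1 - N * (n : ℝ) ^ (-α))) *
          (τ ^ (-1 / α) / (τ - 1 / α))) := ENNReal.ofReal_le_ofReal hgamma
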